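/- For every integer n ≥ 1 and every real μ > 0, every ζ ∈ ℂ^{n+1} with |ζ|² < min{1, μ} lies in the range of Φ_{n,μ}; i.e. the open ball of radius √(min{1,μ}) centered at the origin of ℂ^{n+1} is contained in the image of Φ_{n,μ}. -/

import Mathlib

/-- `∏ j, (1 + |z j|²)^μ`. -/
noncomputable def prodPStar (n : ℕ) (μ : ℝ) (z : Fin n → ℂ) : ℝ :=
  ∏ j, (1 + ‖z j‖ ^ 2) ^ μ

/-- The dual global coordinates map `Φ_{n,μ}`. -/
noncomputable def PhiMap (n : ℕ) (μ : ℝ) : (Fin n → ℂ) × ℂ → (Fin n → ℂ) × ℂ :=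
  fun p =>
    (Real.sqrt (prodPStar n μ p.1 + ‖p.2‖ ^ 2))⁻¹ •
      (fun j => (Real.sqrt (μ * prodPStar n μ p.1) : ℂ) * p.1 j /
          (Real.sqrt (1 + ‖p.1 j‖ ^ 2) : ℂ),
        p.2)

lemma aux_cancel (a b c x : ℂ) (ha : a ≠ 0) (hb : b ≠ 0) (hc : c ≠ 0) :
    a⁻¹ * (a * b * c * (x / b) / c) = x := by
  field_simp

theorem stmt_5 (n : ℕ) (hn : 1 ≤ n) (μ : ℝ) (hμ : 0 < μ)
    (ζ : (Fin n → ℂ) × ℂ)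
    (hζ : (∑ j, ‖ζ.1 j‖ ^ 2) + ‖ζ.2‖ ^ 2 < min 1 μ) :
    ζ ∈ Set.range (PhiMap n μ) := by
  set β : ℝ := ‖ζ.2‖ ^ 2 with hβdef
  have hβ0 : 0 ≤ β := sq_nonneg _
  have hS0 : 0 ≤ ∑ j, ‖ζ.1 j‖ ^ 2 :=
    Finset.sum_nonneg fun j _ => sq_nonneg _
  have hmin1 : (∑ j, ‖ζ.1 j‖ ^ 2) + β < 1 :=
    lt_of_lt_of_le hζ (min_le_left _ _)
  have hminμ : (∑ j, ‖ζ.1 j‖ ^ 2) + β < μ :=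
    lt_of_lt_of_le hζ (min_le_right _ _)
  have hβ1 : β < 1 := by linarith
  set c : ℝ := μ * (1 - β) with hcdef
  have hc0 : 0 < c := mul_pos hμ (by linarith)
  have hkey : ∀ j, ‖ζ.1 j‖ ^ 2 < c := by
    intro j
    have hle : ‖ζ.1 j‖ ^ 2 ≤ ∑ k, ‖ζ.1 k‖ ^ 2 :=
      Finset.single_le_sum (f := fun k => ‖ζ.1 k‖ ^ 2)
        (fun k _ => sq_nonneg _) (Finset.mem_univ j)
    rcases le_or_gt μ 1 with hμ1 | hμ1
    · have : μ * β ≤ β := by nlinarith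
      rw [hcdef]; nlinarith
    · rw [hcdef]; nlinarith
  set z : Fin n → ℂ := fun j => ζ.1 j / (Real.sqrt (c - ‖ζ.1 j‖ ^ 2) : ℂ)
    with hzdef
  have habs : ∀ j, 1 + ‖z j‖ ^ 2 = c / (c - ‖ζ.1 j‖ ^ 2) := by
    intro j
    have hd : 0 < c - ‖ζ.1 j‖ ^ 2 := by linarith [hkey j]
    have h1 : ‖z j‖ = ‖ζ.1 j‖ / Real.sqrt (c - ‖ζ.1 j‖ ^ 2) := by
      rw [hzdef]
      simp [norm_div, Complex.norm_real, Real.norm_eq_abs, abs_of_nonneg (Real.sqrt_nonneg _)]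
    rw [h1, div_pow, Real.sq_sqrt hd.le]
    field_simp
    ring
  set P : ℝ := prodPStar n μ z with hPdef
  have hP0 : 0 < P := by
    rw [hPdef, prodPStar]
    apply Finset.prod_pos
    intro j _
    exact Real.rpow_pos_of_pos (by positivity) _
  set w : ℂ := (Real.sqrt (P / (1 - β)) : ℂ) * ζ.2 with hwdef
  have h1β : (0:ℝ) < 1 - β := by linarith
  have hwabs : ‖w‖ ^ 2 = P / (1 - β) * β := by
    rw [hwdef, norm_mul, Complex.norm_real, Real.norm_eq_abs, abs_of_nonneg (Real.sqrt_nonneg _),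
      mul_pow, Real.sq_sqrt (by positivity)]
  have hsum : P + ‖w‖ ^ 2 = P / (1 - β) := by
    rw [hwabs]; field_simp; ring
  refine ⟨(z, w), ?_⟩
  have hprodeq : prodPStar n μ z = P := rfl
  rw [PhiMap]
  simp only [hprodeq, hsum]
  have hs1 : (0:ℝ) < Real.sqrt (P / (1 - β)) := Real.sqrt_pos.mpr (by positivity)
  ext j
  · -- first component
    simp only [Prod.fst, Prod.smul_fst, Pi.smul_apply, Complex.real_smul]
    set d : ℝ := ‖ζ.1 j‖ ^ 2 with hddef
    have hd : 0 < c - d := by rw [hddef]; linarith [hkey j]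
    have hzj : z j = ζ.1 j / (Real.sqrt (c - d) : ℂ) := rfl
    have h14 : 1 + ‖z j‖ ^ 2 = c / (c - d) := habs j
    rw [hzj, h14]
    have hs3 : (0:ℝ) < Real.sqrt (c - d) := Real.sqrt_pos.mpr hd
    have hs4 : (0:ℝ) < Real.sqrt (c / (c - d)) := Real.sqrt_pos.mpr (by positivity)
    have hkey2 : Real.sqrt (μ * P) =
        Real.sqrt (P / (1 - β)) * Real.sqrt (c - d) * Real.sqrt (c / (c - d)) := by
      rw [← Real.sqrt_mul (by positivity), ← Real.sqrt_mul (by positivity)]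
      congr 1
      field_simp
      rw [hcdef]
    have hkey2c : (Real.sqrt (μ * P) : ℂ) =
        (Real.sqrt (P / (1 - β)) : ℂ) * (Real.sqrt (c - d) : ℂ) *
          (Real.sqrt (c / (c - d)) : ℂ) := by
      rw [hkey2]; push_cast; ring
    rw [hkey2c]
    have h1 : (Real.sqrt (P / (1 - β)) : ℂ) ≠ 0 := by
      exact_mod_cast hs1.ne'
    have h3 : (Real.sqrt (c - d) : ℂ) ≠ 0 := by exact_mod_cast hs3.ne'
    have h4 : (Real.sqrt (c / (c - d)) : ℂ) ≠ 0 := by exact_mod_cast hs4.ne'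
    rw [Complex.ofReal_inv]
    exact aux_cancel _ _ _ _ h1 h3 h4
  · -- second component
    simp only [Prod.snd, Prod.smul_snd, Complex.real_smul, hwdef]
    have h1 : (Real.sqrt (P / (1 - β)) : ℂ) ≠ 0 := by exact_mod_cast hs1.ne'
    rw [Complex.ofReal_inv, ← mul_assoc, inv_mul_cancel₀ h1, one_mul]
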